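/- Let G be a directed graph and let X be the set of all vertices reachable from a fixed vertex s. Suppose further that vertices of G are partitioned into at most m classes such that for any u ∈ X and v ∉ X in distinct classes, whether (u,v) or (v,u) is an arc of G depends only on the pair of classes, in the sense that the underlying undirected adjacency in a fixed undirected graph H is determined up to a class-dependent flip. Then in H, the bipartite adjacency matrix Adj_H[X, V∖X] has at most m distinct rows, hence F_2-rank at most m. -/

import Mathlib

/-- The bipartite adjacency matrix over F₂ between a vertex set `X` and its complement. -/
def cutMatrix {V : Type} [Fintype V] (G : SimpleGraph V) [DecidableRel G.Adj]
    (X : Finset V) : Matrix {v : V // v ∈ X} {v : V // v ∉ X} (ZMod 2) :=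
  fun u w => if G.Adj u.1 w.1 then 1 else 0

/-- Let G be a directed flip of an undirected graph H with respect to a
partition into m classes (via class map c and flip relation A), and let X be the set
of vertices reachable from s in G. Then Adj_H[X, V∖X] has at most m distinct rows,
hence F₂-rank at most m. -/
theorem reachable_set_low_rank {V : Type} [Fintype V] [DecidableEq V]
    (H : SimpleGraph V) [DecidableRel H.Adj]
    (m : ℕ) (c : V → Fin m) (A : Fin m → Fin m → Prop) (s : V)
    (E : V → V → Prop)
    (hE : ∀ u v : V, E u v ↔ u ≠ v ∧ Xor' (H.Adj u v) (A (c u) (c v)))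
    (X : Finset V) (hX : ∀ v : V, v ∈ X ↔ Relation.ReflTransGen E s v) :
    (Finset.univ.image
        fun u : {v : V // v ∈ X} => fun w : {v : V // v ∉ X} => cutMatrix H X u w).card ≤ m
    ∧ (cutMatrix H X).rank ≤ m := by
  classical
  -- Key: for u ∈ X, w ∉ X, adjacency is determined by classes.
  have key : ∀ (u : {v : V // v ∈ X}) (w : {v : V // v ∉ X}),
      (H.Adj u.1 w.1 ↔ A (c u.1) (c w.1)) := by
    rintro ⟨u, hu⟩ ⟨w, hw⟩
    have hne : u ≠ w := by rintro rfl; exact hw hu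
    have hnE : ¬ E u w := by
      intro hEuw
      exact hw ((hX w).2 (Relation.ReflTransGen.tail ((hX u).1 hu) hEuw))
    have := (hE u w).not.mp hnE
    simp only [hne, not_true, true_and, ne_eq, not_false_eq_true] at this
    rcases Classical.em (H.Adj u w) with h | h <;>
      rcases Classical.em (A (c u) (c w)) with h' | h' <;>
      simp_all [Xor']
  -- Matrix entry depends only on classes.
  have hentry : ∀ (u : {v : V // v ∈ X}) (w : {v : V // v ∉ X}),
      cutMatrix H X u w = if A (c u.1) (c w.1) then 1 else 0 := by
    intro u w
    simp only [cutMatrix]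
    by_cases h : A (c u.1) (c w.1)
    · simp [h, (key u w).2 h]
    · have : ¬ H.Adj u.1 w.1 := fun ha => h ((key u w).1 ha)
      simp [h, this]
  set f : Fin m → {v : V // v ∉ X} → ZMod 2 :=
    fun j w => if A j (c w.1) then 1 else 0 with hf
  have hrow : ∀ u : {v : V // v ∈ X},
      (fun w : {v : V // v ∉ X} => cutMatrix H X u w) = f (c u.1) := by
    intro u; funext w; exact hentry u w
  constructor
  · have hsub : (Finset.univ.image
        fun u : {v : V // v ∈ X} => fun w : {v : V // v ∉ X} => cutMatrix H X u w)
        ⊆ Finset.univ.image f := by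
      intro r hr
      simp only [Finset.mem_image, Finset.mem_univ, true_and] at hr ⊢
      obtain ⟨u, hu⟩ := hr
      exact ⟨c u.1, by rw [← hrow u]; exact hu⟩
    calc _ ≤ (Finset.univ.image f).card := Finset.card_le_card hsub
      _ ≤ (Finset.univ : Finset (Fin m)).card := Finset.card_image_le
      _ = m := by simp
  · -- Factor the matrix as B * C.
    set B : Matrix {v : V // v ∈ X} (Fin m) (ZMod 2) :=
      fun u j => if j = c u.1 then 1 else 0 with hB
    set C : Matrix (Fin m) {v : V // v ∉ X} (ZMod 2) :=
      fun j w => if A j (c w.1) then 1 else 0 with hC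
    have hfac : cutMatrix H X = B * C := by
      funext u w
      rw [hentry u w]
      rw [Matrix.mul_apply]
      simp only [hB, hC, ite_mul, one_mul, zero_mul]
      simp [Finset.sum_ite_eq']
    rw [hfac]
    calc (B * C).rank ≤ C.rank := Matrix.rank_mul_le_right B C
      _ ≤ Fintype.card (Fin m) := Matrix.rank_le_card_height C
      _ = m := Fintype.card_fin m
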